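/- The antiautomorphism ζ of the free algebra V on x,y that swaps x and y (reversing words and exchanging letters) is an antiautomorphism of the q-shuffle algebra: ζ(u ⋆ v) = ζ(v) ⋆ ζ(u) for all u, v ∈ V. -/

import Mathlib

open scoped Classical

inductive Letter | x | y
deriving DecidableEq

instance : Fintype Letter :=
  ⟨{Letter.x, Letter.y}, fun a => by cases a <;> simp⟩

/-- x ↦ 1, y ↦ -1 -/
def bar : Letter → ℤ
  | .x => 1
  | .y => -1

/-- σ swaps the letters x and y. -/
def sigma : Letter → Letter
  | .x => .y
  | .y => .x

/-- the pairing ⟨u,v⟩ : 2 if u = v, -2 otherwise. -/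
def pair : Letter → Letter → ℤ := fun u v => if u = v then 2 else -2

noncomputable section

/-- The free associative algebra on the two letters x, y (with its word basis). -/
abbrev V (F : Type*) [Field F] := MonoidAlgebra F (FreeMonoid Letter)

variable {F : Type*} [Field F]

/-- the basis word of V corresponding to a list of letters -/
def wd (w : List Letter) : V F := MonoidAlgebra.single (FreeMonoid.ofList w) 1

/-- the q-shuffle product of two words, by the left recursion -/
def shuffleWord (q : F) : List Letter → List Letter → V F
  | [], v => wd v
  | u1 :: ut, [] => wd (u1 :: ut)
  | u1 :: ut, v1 :: vt =>
      wd [u1] * shuffleWord q ut (v1 :: vt)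
      + q ^ (((u1 :: ut).map (fun a => pair a v1)).sum) •
          (wd [v1] * shuffleWord q (u1 :: ut) vt)
termination_by u v => u.length + v.length

/-- the q-shuffle product on V, extended bilinearly -/
def shuffle (q : F) (a b : V F) : V F :=
  a.coeff.sum fun u cu => b.coeff.sum fun v cv =>
    (cu * cv) • shuffleWord q (FreeMonoid.toList u) (FreeMonoid.toList v)

/-- the quantum integer [m]_q -/
def qint (q : F) (m : ℤ) : F := (q ^ m - q ^ (-m)) / (q - q⁻¹)

/-- the quantum factorial [m]_q! -/
def qfac (q : F) (m : ℤ) : F := ∏ j ∈ Finset.range m.toNat, qint q ((j : ℤ) + 1)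

/-- e_i = ā_1 + ⋯ + ā_i, the i-th elevation of the word w -/
def esum (w : List Letter) (i : ℕ) : ℤ := ((w.take i).map bar).sum

/-- A word is Catalan when all partial sums of bar are nonnegative and the total is zero. -/
def IsCatalan (w : List Letter) : Prop :=
  (∀ i, i ≤ w.length → 0 ≤ esum w i) ∧ esum w w.length = 0

/-- the coefficient C(w) = ∏_{i=0}^{2n} [1 + e_i]_q -/
def Ccoef (q : F) (w : List Letter) : F :=
  ∏ i ∈ Finset.range (w.length + 1), qint q (1 + esum w i)

/-- the n-th Catalan element C_n = ∑_{w ∈ Cat_n} C(w) w  -/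
def catalanElt (q : F) (n : ℕ) : V F :=
  ∑ f : Fin (2 * n) → Letter,
    if IsCatalan (List.ofFn f) then Ccoef q (List.ofFn f) • wd (List.ofFn f) else 0

/-- the antiautomorphism ζ : reverse the word and swap x,y, extended linearly -/
def zeta (a : V F) : V F :=
  a.coeff.sum fun w c =>
    MonoidAlgebra.single (FreeMonoid.ofList (((FreeMonoid.toList w).map sigma).reverse)) c

/-- The profile of a word: delete from the elevation sequence every interior e_i
    such that e_{i+1}-e_i and e_i-e_{i-1} have the same sign. -/
def profile (w : List Letter) : List ℤ :=
  (List.range (w.length + 1)).filterMap fun i =>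
    if i = 0 ∨ i = w.length then some (esum w i)
    else if 0 < (esum w (i + 1) - esum w i) * (esum w i - esum w (i - 1)) then none
    else some (esum w i)

/-- The list (ℓ_0, h_1, ℓ_1, h_2, …, h_r, ℓ_r). -/
def P (r : ℕ) (ℓ h : ℕ → ℤ) : List ℤ :=
  List.ofFn fun i : Fin (2 * r + 1) =>
    if i.val % 2 = 0 then ℓ (i.val / 2) else h ((i.val + 1) / 2)

/-- the word x^{h_1} y^{h_1-ℓ_1} x^{h_2-ℓ_1} y^{h_2-ℓ_2} ⋯ x^{h_r-ℓ_{r-1}} y^{h_r} -/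
def explicitWord (r : ℕ) (ℓ h : ℕ → ℤ) : List Letter :=
  (List.range r).flatMap fun i =>
    List.replicate (h (i + 1) - ℓ i).toNat Letter.x ++
      List.replicate (h (i + 1) - ℓ (i + 1)).toNat Letter.y

/-- C(ℓ_0,h_1,…,h_r,ℓ_r), the ratio of q-factorials attached to a profile. -/
def Cprof (q : F) (r : ℕ) (ℓ h : ℕ → ℤ) : F :=
  (∏ i ∈ Finset.Icc 1 r, qfac q (h i) * qfac q (h i + 1)) /
    (∏ i ∈ Finset.range (r + 1), qfac q (ℓ i) * qfac q (ℓ i + 1))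

end
open scoped Classical
namespace S8
variable {F : Type*} [Field F]

def E (b : Letter) (w : List Letter) : ℤ := (w.map (fun a => pair a b)).sum

lemma pair_comm (a b : Letter) : pair a b = pair b a := by
  cases a <;> cases b <;> rfl

lemma pair_sigma (a b : Letter) : pair (sigma a) (sigma b) = pair a b := by
  cases a <;> cases b <;> rfl

lemma E_nil (b : Letter) : E b [] = 0 := rfl

lemma E_cons (b a : Letter) (w : List Letter) : E b (a :: w) = pair a b + E b w := by
  simp [E]

lemma E_append (b : Letter) (w₁ w₂ : List Letter) : E b (w₁ ++ w₂) = E b w₁ + E b w₂ := by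
  simp [E]

lemma E_sigma_rev (b : Letter) (w : List Letter) :
    E (sigma b) ((w.map sigma).reverse) = E b w := by
  simp only [E, List.map_reverse, List.sum_reverse, List.map_map]
  congr 1
  apply List.map_congr_left
  intro a _
  simp [Function.comp, pair_sigma]

lemma wd_mul (u v : List Letter) : (wd u : V F) * wd v = wd (u ++ v) := by
  unfold wd
  rw [MonoidAlgebra.single_mul_single, one_mul]
  rfl

lemma S_nil_left (q : F) (v : List Letter) : shuffleWord q [] v = wd v := by
  rw [shuffleWord]

lemma S_nil_right (q : F) (u : List Letter) : shuffleWord q u [] = wd u := by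
  cases u <;> rw [shuffleWord]

lemma S_cons (q : F) (a : Letter) (ut : List Letter) (b : Letter) (vt : List Letter) :
    shuffleWord q (a :: ut) (b :: vt) =
      wd [a] * shuffleWord q ut (b :: vt)
      + q ^ (E b (a :: ut)) • (wd [b] * shuffleWord q (a :: ut) vt) := by
  rw [shuffleWord]
  rfl

end S8
namespace S8
variable {F : Type*} [Field F]

lemma S_right_aux (q : F) (hq0 : q ≠ 0) :
    ∀ n : ℕ, ∀ u v : List Letter, u.length + v.length ≤ n → ∀ a b : Letter,
    shuffleWord q (u ++ [a]) (v ++ [b]) =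
      q ^ (E a (v ++ [b])) • (shuffleWord q u (v ++ [b]) * wd [a])
      + shuffleWord q (u ++ [a]) v * wd [b] := by
  intro n
  induction n with
  | zero =>
    intro u v h a b
    have hu : u = [] := by simpa using (by omega : u.length = 0)
    have hv : v = [] := by simpa using (by omega : v.length = 0)
    subst hu; subst hv
    simp only [List.nil_append, S_cons, S_nil_left, S_nil_right, E_cons, E_nil, add_zero,
      pair_comm b a]
    exact add_comm _ _
  | succ n ih =>
    intro u v h a b
    match u, v with
    | [], [] =>
      simp only [List.nil_append, S_cons, S_nil_left, S_nil_right, E_cons, E_nil, add_zero,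
        pair_comm b a]
      exact add_comm _ _
    | [], v1 :: vt =>
      have IH := ih [] vt (by simp at h ⊢; omega) a b
      simp only [List.nil_append] at IH ⊢
      rw [List.cons_append, S_cons q a [] v1 (vt ++ [b]), S_nil_left, IH,
        S_cons q a [] v1 vt, S_nil_left]
      simp only [E_cons, E_nil, E_append, add_zero, pair_comm v1 a, pair_comm b a,
        zpow_add₀ hq0, mul_add, add_mul, smul_add, smul_smul, smul_mul_assoc,
        mul_smul_comm, mul_assoc, wd_mul, List.cons_append, List.append_assoc,
        List.singleton_append, List.nil_append, S_nil_left]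
      module
    | u1 :: ut, [] =>
      have IH := ih ut [] (by simp at h ⊢; omega) a b
      simp only [List.nil_append] at IH ⊢
      rw [List.cons_append, S_cons q u1 (ut ++ [a]) b [], IH, S_cons q u1 ut b []]
      simp only [S_nil_right, E_cons, E_nil, E_append, add_zero, pair_comm b a,
        zpow_add₀ hq0, mul_add, add_mul, smul_add, smul_smul, smul_mul_assoc,
        mul_smul_comm, mul_assoc, wd_mul, List.cons_append, List.append_assoc,
        List.singleton_append, List.nil_append, S_nil_left]
      module
    | u1 :: ut, v1 :: vt =>
      have IH1 := ih ut (v1 :: vt) (by simp at h ⊢; omega) a b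
      have IH2 := ih (u1 :: ut) vt (by simp at h ⊢; omega) a b
      simp only [List.cons_append] at IH1 IH2 ⊢
      rw [S_cons q u1 (ut ++ [a]) v1 (vt ++ [b]), IH1, IH2,
        S_cons q u1 ut v1 (vt ++ [b]), S_cons q u1 (ut ++ [a]) v1 vt]
      simp only [E_cons, E_nil, E_append, add_zero, pair_comm b a, pair_comm v1 a, zpow_add₀ hq0, mul_add, add_mul, smul_add, smul_smul,
        smul_mul_assoc, mul_smul_comm, mul_assoc, wd_mul, List.cons_append,
        List.append_assoc, List.singleton_append, List.nil_append, S_nil_left]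
      module

end S8
namespace S8
variable {F : Type*} [Field F]

def g : FreeMonoid Letter → FreeMonoid Letter :=
  fun w => FreeMonoid.ofList (((FreeMonoid.toList w).map sigma).reverse)

lemma sigma_sigma (a : Letter) : sigma (sigma a) = a := by cases a <;> rfl

lemma g_invol : Function.Involutive (g) := by
  intro w
  simp only [g, FreeMonoid.toList_ofList, List.map_reverse, List.reverse_reverse,
    List.map_map]
  rw [show sigma ∘ sigma = id from funext sigma_sigma, List.map_id,
    FreeMonoid.ofList_toList]

lemma zeta_eq_mapDomain (a : V F) :
    zeta a = MonoidAlgebra.ofCoeff (Finsupp.mapDomain g a.coeff) := by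
  rw [Finsupp.mapDomain, MonoidAlgebra.ofCoeff_finsuppSum]; rfl

lemma zeta_single (m : FreeMonoid Letter) (c : F) :
    zeta (MonoidAlgebra.single m c) = MonoidAlgebra.single (g m) c := by
  rw [zeta_eq_mapDomain, MonoidAlgebra.coeff_single, Finsupp.mapDomain_single]; rfl

lemma zeta_zero : zeta (0 : V F) = 0 := by
  rw [zeta_eq_mapDomain, MonoidAlgebra.coeff_zero, Finsupp.mapDomain_zero]; rfl

lemma zeta_add (a b : V F) : zeta (a + b) = zeta a + zeta b := by
  simp only [zeta_eq_mapDomain, MonoidAlgebra.coeff_add, Finsupp.mapDomain_add]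
  rfl

lemma zeta_smul (c : F) (a : V F) : zeta (c • a) = c • zeta a := by
  simp only [zeta_eq_mapDomain, MonoidAlgebra.coeff_smul, Finsupp.mapDomain_smul]
  rfl

lemma g_mul (m m' : FreeMonoid Letter) : g (m * m') = g m' * g m := by
  simp only [g, FreeMonoid.toList_mul, List.map_append, List.reverse_append]
  rfl

lemma zeta_mul (A B : V F) : zeta (A * B) = zeta B * zeta A := by
  induction A using MonoidAlgebra.induction_linear with
  | zero => rw [zero_mul, zeta_zero, mul_zero]
  | add f g hf hg => rw [add_mul, zeta_add, zeta_add, mul_add, hf, hg]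
  | single m c =>
    induction B using MonoidAlgebra.induction_linear with
    | zero => rw [mul_zero, zeta_zero, zero_mul]
    | add f g hf hg => rw [mul_add, zeta_add, zeta_add, add_mul, hf, hg]
    | single m' c' =>
      rw [MonoidAlgebra.single_mul_single, zeta_single, zeta_single, zeta_single,
        MonoidAlgebra.single_mul_single, g_mul, mul_comm c c']

lemma zeta_wd (w : List Letter) : zeta (wd w : V F) = wd ((w.map sigma).reverse) := by
  simp [wd, zeta_single, g, FreeMonoid.toList_ofList]

lemma rm_cons (a : Letter) (w : List Letter) :
    ((a :: w).map sigma).reverse = (w.map sigma).reverse ++ [sigma a] := by simp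

lemma zeta_S_aux (q : F) (hq0 : q ≠ 0) :
    ∀ n : ℕ, ∀ u v : List Letter, u.length + v.length ≤ n →
    zeta (shuffleWord q u v) =
      shuffleWord q ((v.map sigma).reverse) ((u.map sigma).reverse) := by
  intro n
  induction n with
  | zero =>
    intro u v h
    have hu : u = [] := by simpa using (by omega : u.length = 0)
    have hv : v = [] := by simpa using (by omega : v.length = 0)
    subst hu; subst hv
    simp [S_nil_left, zeta_wd]
  | succ n ih =>
    intro u v h
    match u, v with
    | [], v => simp [S_nil_left, S_nil_right, zeta_wd]
    | u1 :: ut, [] => simp [S_nil_left, S_nil_right, zeta_wd]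
    | u1 :: ut, v1 :: vt =>
      have IH1 := ih ut (v1 :: vt) (by simp at h ⊢; omega)
      have IH2 := ih (u1 :: ut) vt (by simp at h ⊢; omega)
      rw [S_cons, zeta_add, zeta_smul, zeta_mul, zeta_mul, IH1, IH2, zeta_wd, zeta_wd,
        rm_cons v1 vt, rm_cons u1 ut,
        S_right_aux q hq0 (((vt.map sigma).reverse).length + ((ut.map sigma).reverse).length)
          ((vt.map sigma).reverse) ((ut.map sigma).reverse) le_rfl (sigma v1) (sigma u1)]
      rw [← rm_cons u1 ut, E_sigma_rev v1 (u1 :: ut)]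
      simp only [List.map_reverse, List.map_cons]
      exact add_comm _ _

end S8
namespace S8
variable {F : Type*} [Field F]

noncomputable def zetaHom : V F →+ V F :=
  { toFun := zeta, map_zero' := zeta_zero, map_add' := zeta_add }

lemma zeta_sum {ι : Type*} (s : Finset ι) (f : ι → V F) :
    zeta (∑ i ∈ s, f i) = ∑ i ∈ s, zeta (f i) :=
  map_sum zetaHom f s

lemma toList_g (v : FreeMonoid Letter) :
    FreeMonoid.toList (g v) = ((FreeMonoid.toList v).map sigma).reverse := by
  simp [g, FreeMonoid.toList_ofList]

end S8

theorem stmt8 {F : Type*} [Field F] (q : F) (hq0 : q ≠ 0)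
    (a b : V F) :
    zeta (shuffle q a b) = shuffle q (zeta b) (zeta a) := by
  classical
  have L : zeta (shuffle q a b) = a.coeff.sum fun u cu => b.coeff.sum fun v cv =>
      (cu * cv) • shuffleWord q (((FreeMonoid.toList v).map sigma).reverse)
        (((FreeMonoid.toList u).map sigma).reverse) := by
    rw [shuffle, Finsupp.sum, S8.zeta_sum]
    apply Finset.sum_congr rfl
    intro u _
    rw [Finsupp.sum, S8.zeta_sum]
    apply Finset.sum_congr rfl
    intro v _
    rw [S8.zeta_smul, S8.zeta_S_aux q hq0 _ _ _ le_rfl]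
  have R : shuffle q (zeta b) (zeta a) = b.coeff.sum fun v cv => a.coeff.sum fun u cu =>
      (cv * cu) • shuffleWord q (((FreeMonoid.toList v).map sigma).reverse)
        (((FreeMonoid.toList u).map sigma).reverse) := by
    rw [shuffle, S8.zeta_eq_mapDomain b, S8.zeta_eq_mapDomain a, MonoidAlgebra.coeff_ofCoeff,
      MonoidAlgebra.coeff_ofCoeff, Finsupp.sum_mapDomain_index_inj S8.g_invol.injective]
    apply Finsupp.sum_congr
    intro v _
    rw [Finsupp.sum_mapDomain_index_inj S8.g_invol.injective]
    apply Finsupp.sum_congr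
    intro u _
    rw [S8.toList_g, S8.toList_g]
  rw [L, R, Finsupp.sum_comm]
  apply Finsupp.sum_congr
  intro v _
  apply Finsupp.sum_congr
  intro u _
  rw [mul_comm]
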